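/- Let G : U × U → ℝ (U ⊆ ℝ^s open convex) be twice continuously differentiable with G(θ, θ) constant in θ, and define H_i(γ) = ∂G(γ, δ)/∂δ_i evaluated at δ = γ. If θ̂_n is a sequence of random vectors with θ̂_n − θ₀ = O_p(1/√n) and the second derivatives of G are uniformly bounded, then [G(θ₀, θ̂_n) − G(θ₀, θ₀)] + [G(θ̂_n, θ₀) − G(θ₀, θ₀)] = Σ_i [H_i(θ₀) − H_i(θ̂_n)](θ̂_{n,i} − θ_{0,i}) + O_p(1/n), and this whole expression is O_p(1/n). -/
import Mathlib


open MeasureTheory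

/-- `X_n = O_p(a_n)`: boundedness in probability. -/
def IsBigOp {Ω : Type*} [MeasurableSpace Ω] (μ : Measure Ω)
    (X : ℕ → Ω → ℝ) (a : ℕ → ℝ) : Prop :=
  ∀ ε > 0, ∃ M : ℝ, ∀ n, μ {ω | |X n ω| > M * a n} < ENNReal.ofReal ε


theorem aux_det {s : ℕ} (U : Set (Fin s → ℝ)) (hUopen : IsOpen U) (hUconv : Convex ℝ U)
    (G : (Fin s → ℝ) × (Fin s → ℝ) → ℝ) (hG : ContDiffOn ℝ 2 G (U ×ˢ U))
    (c : ℝ) (hGdiag : ∀ θ ∈ U, G (θ, θ) = c)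
    (C : ℝ) (hC : ∀ x ∈ U ×ˢ U, ‖iteratedFDerivWithin ℝ 2 G (U ×ˢ U) x‖ ≤ C)
    (H : Fin s → (Fin s → ℝ) → ℝ)
    (hH : ∀ i, ∀ γ ∈ U, H i γ = fderiv ℝ (fun δ => G (γ, δ)) γ (Pi.single i 1))
    (θ0 : Fin s → ℝ) (hθ0 : θ0 ∈ U) :
    ∃ K, 0 ≤ K ∧ ∀ θ ∈ U,
      |(G (θ0, θ) - G (θ0, θ0)) + (G (θ, θ0) - G (θ0, θ0))| ≤ K * ‖θ - θ0‖ ^ 2 ∧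
      |((G (θ0, θ) - G (θ0, θ0)) + (G (θ, θ0) - G (θ0, θ0)))
          - ∑ i, (H i θ0 - H i θ) * (θ i - θ0 i)| ≤ K * ‖θ - θ0‖ ^ 2 := by
  set S : Set ((Fin s → ℝ) × (Fin s → ℝ)) := U ×ˢ U with hS
  have hSo : IsOpen S := hUopen.prod hUopen
  have hSc : Convex ℝ S := hUconv.prod hUconv
  have hSmem : ∀ {γ δ : Fin s → ℝ}, γ ∈ U → δ ∈ U → (γ, δ) ∈ S :=
    fun hγ hδ => Set.mk_mem_prod hγ hδ
  have ha : ((θ0, θ0) : (Fin s → ℝ) × (Fin s → ℝ)) ∈ S := hSmem hθ0 hθ0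
  have hC0 : 0 ≤ C := le_trans (norm_nonneg _) (hC _ ha)
  -- differentiability of G at points of S
  have hdiff : ∀ x ∈ S, DifferentiableAt ℝ G x := by
    intro x hx
    exact (hG.contDiffAt (hSo.mem_nhds hx)).differentiableAt (by norm_num)
  -- differentiability of the first derivative
  have hΦdiff : ∀ x ∈ S, DifferentiableAt ℝ (iteratedFDeriv ℝ 1 G) x := by
    intro x hx
    have h1 : DifferentiableWithinAt ℝ (iteratedFDerivWithin ℝ 1 G S) S x :=
      hG.differentiableOn_iteratedFDerivWithin (by norm_num) hSo.uniqueDiffOn x hx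
    have h2 : DifferentiableAt ℝ (iteratedFDerivWithin ℝ 1 G S) x :=
      h1.differentiableAt (hSo.mem_nhds hx)
    have hev : iteratedFDeriv ℝ 1 G =ᶠ[nhds x] iteratedFDerivWithin ℝ 1 G S :=
      Filter.eventuallyEq_of_mem (hSo.mem_nhds hx)
        (fun y hy => (iteratedFDerivWithin_of_isOpen 1 hSo hy).symm)
    exact h2.congr_of_eventuallyEq hev
  have hΦbound : ∀ x ∈ S, ‖fderiv ℝ (iteratedFDeriv ℝ 1 G) x‖ ≤ C := by
    intro x hx
    rw [norm_fderiv_iteratedFDeriv, ← iteratedFDerivWithin_of_isOpen 2 hSo hx]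
    exact hC x hx
  -- Lipschitz bound on the first derivative
  have hLip : ∀ x ∈ S, ∀ y ∈ S, ‖fderiv ℝ G y - fderiv ℝ G x‖ ≤ C * ‖y - x‖ := by
    intro x hx y hy
    have hΦ : ‖iteratedFDeriv ℝ 1 G y - iteratedFDeriv ℝ 1 G x‖ ≤ C * ‖y - x‖ :=
      hSc.norm_image_sub_le_of_norm_hasFDerivWithin_le
        (fun z hz => (hΦdiff z hz).hasFDerivAt.hasFDerivWithinAt) hΦbound hx hy
    refine ContinuousLinearMap.opNorm_le_bound _ (le_trans (norm_nonneg _) hΦ) ?_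
    intro v
    have : (fderiv ℝ G y - fderiv ℝ G x) v =
        (iteratedFDeriv ℝ 1 G y - iteratedFDeriv ℝ 1 G x) (fun _ => v) := by
      simp [iteratedFDeriv_one_apply]
    rw [this]
    calc ‖(iteratedFDeriv ℝ 1 G y - iteratedFDeriv ℝ 1 G x) (fun _ => v)‖
        ≤ ‖iteratedFDeriv ℝ 1 G y - iteratedFDeriv ℝ 1 G x‖ * ∏ _i : Fin 1, ‖v‖ :=
          (iteratedFDeriv ℝ 1 G y - iteratedFDeriv ℝ 1 G x).le_opNorm _
      _ = ‖iteratedFDeriv ℝ 1 G y - iteratedFDeriv ℝ 1 G x‖ * ‖v‖ := by simp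
      _ ≤ C * ‖y - x‖ * ‖v‖ := by
          exact mul_le_mul_of_nonneg_right hΦ (norm_nonneg v)
  -- Taylor bound at a = (θ0, θ0)
  have htaylor : ∀ b ∈ S, ‖G b - G (θ0, θ0) - fderiv ℝ G (θ0, θ0) (b - (θ0, θ0))‖ ≤
      C * ‖b - (θ0, θ0)‖ ^ 2 := by
    intro b hb
    set a : (Fin s → ℝ) × (Fin s → ℝ) := (θ0, θ0) with haa
    have hseg : segment ℝ a b ⊆ S := hSc.segment_subset ha hb
    have key : ‖G b - G a - (fderiv ℝ G a) (b - a)‖ ≤ (C * ‖b - a‖) * ‖b - a‖ := by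
      refine Convex.norm_image_sub_le_of_norm_hasFDerivWithin_le'
        (f' := fun z => fderiv ℝ G z)
        (fun z hz => (hdiff z (hseg hz)).hasFDerivAt.hasFDerivWithinAt) ?_
        (convex_segment a b) (left_mem_segment ℝ a b) (right_mem_segment ℝ a b)
      intro z hz
      obtain ⟨u, v, hu, hv, huv, rfl⟩ := hz
      have hz' : u • a + v • b - a = v • (b - a) := by
        have hu1 : u = 1 - v := by linarith
        rw [smul_sub, hu1, sub_smul, one_smul]; abel
      have h1 : ‖u • a + v • b - a‖ ≤ ‖b - a‖ := by
        rw [hz', norm_smul, Real.norm_of_nonneg hv]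
        nlinarith [norm_nonneg (b - a)]
      calc ‖fderiv ℝ G (u • a + v • b) - fderiv ℝ G a‖
          ≤ C * ‖u • a + v • b - a‖ := hLip a ha _ (hseg ⟨u, v, hu, hv, huv, rfl⟩) 
        _ ≤ C * ‖b - a‖ := mul_le_mul_of_nonneg_left h1 hC0
    calc ‖G b - G a - (fderiv ℝ G a) (b - a)‖ ≤ (C * ‖b - a‖) * ‖b - a‖ := key
      _ = C * ‖b - a‖ ^ 2 := by ring
  -- the derivative along the diagonal vanishes
  have hzero : ∀ δ : Fin s → ℝ, fderiv ℝ G (θ0, θ0) (δ, δ) = 0 := by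
    intro δ
    set L : (Fin s → ℝ) →L[ℝ] ((Fin s → ℝ) × (Fin s → ℝ)) :=
      (ContinuousLinearMap.id ℝ (Fin s → ℝ)).prod (ContinuousLinearMap.id ℝ (Fin s → ℝ)) with hL
    have h0 : HasFDerivAt (fun θ : Fin s → ℝ => (θ, θ)) L θ0 := L.hasFDerivAt
    have h1' := HasFDerivAt.comp (f := fun θ : Fin s → ℝ => (θ, θ)) θ0 ((hdiff _ ha).hasFDerivAt) h0
    have h1 : HasFDerivAt (fun θ => G (θ, θ)) ((fderiv ℝ G (θ0, θ0)).comp L) θ0 := h1'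
    have hev : (fun θ => G (θ, θ)) =ᶠ[nhds θ0] (fun _ => c) :=
      Filter.eventuallyEq_of_mem (hUopen.mem_nhds hθ0) (fun θ hθ => hGdiag θ hθ)
    have h2 : HasFDerivAt (fun θ => G (θ, θ)) (0 : (Fin s → ℝ) →L[ℝ] ℝ) θ0 :=
      (hasFDerivAt_const c θ0).congr_of_eventuallyEq hev
    have h3 : (fderiv ℝ G (θ0, θ0)).comp L = 0 := h1.unique h2
    have := congrFun (congrArg DFunLike.coe h3) δ
    simpa [hL] using this
  -- representation of H
  have hHrep : ∀ i, ∀ γ ∈ U, H i γ = fderiv ℝ G (γ, γ) (0, Pi.single i 1) := by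
    intro i γ hγ
    have h1 : HasFDerivAt (fun δ => G (γ, δ))
        ((fderiv ℝ G (γ, γ)).comp (ContinuousLinearMap.inr ℝ (Fin s → ℝ) (Fin s → ℝ))) γ :=
      ((hdiff _ (hSmem hγ hγ)).hasFDerivAt).comp γ (hasFDerivAt_prodMk_right γ γ)
    rw [hH i γ hγ, h1.fderiv]
    rfl
  refine ⟨2 * C + s * C, by positivity, ?_⟩
  intro θ hθ
  have hb1 : ((θ0, θ) : (Fin s → ℝ) × (Fin s → ℝ)) ∈ S := hSmem hθ0 hθ
  have hb2 : ((θ, θ0) : (Fin s → ℝ) × (Fin s → ℝ)) ∈ S := hSmem hθ hθ0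
  have he1 : ((θ0, θ) : (Fin s → ℝ) × (Fin s → ℝ)) - (θ0, θ0) = (0, θ - θ0) := by
    simp [Prod.ext_iff]
  have he2 : ((θ, θ0) : (Fin s → ℝ) × (Fin s → ℝ)) - (θ0, θ0) = (θ - θ0, 0) := by
    simp [Prod.ext_iff]
  have hn0 : ∀ v : Fin s → ℝ, ‖((0, v) : (Fin s → ℝ) × (Fin s → ℝ))‖ = ‖v‖ := by
    intro v; rw [Prod.norm_def]; simp
  have hn0' : ∀ v : Fin s → ℝ, ‖((v, 0) : (Fin s → ℝ) × (Fin s → ℝ))‖ = ‖v‖ := by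
    intro v; rw [Prod.norm_def]; simp
  have t1 := htaylor _ hb1
  have t2 := htaylor _ hb2
  rw [he1, hn0] at t1
  rw [he2, hn0'] at t2
  -- cancellation of the linear terms
  have hcanc : fderiv ℝ G (θ0, θ0) (0, θ - θ0) + fderiv ℝ G (θ0, θ0) (θ - θ0, 0) = 0 := by
    rw [← map_add]
    have : ((0, θ - θ0) : (Fin s → ℝ) × (Fin s → ℝ)) + (θ - θ0, 0) = (θ - θ0, θ - θ0) := by
      simp [Prod.ext_iff]
    rw [this]
    exact hzero _
  -- bound on the symmetric sum
  have hsym : |(G (θ0, θ) - G (θ0, θ0)) + (G (θ, θ0) - G (θ0, θ0))| ≤ 2 * C * ‖θ - θ0‖ ^ 2 := by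
    have : (G (θ0, θ) - G (θ0, θ0)) + (G (θ, θ0) - G (θ0, θ0)) =
        (G (θ0, θ) - G (θ0, θ0) - fderiv ℝ G (θ0, θ0) (0, θ - θ0)) +
        (G (θ, θ0) - G (θ0, θ0) - fderiv ℝ G (θ0, θ0) (θ - θ0, 0)) +
        (fderiv ℝ G (θ0, θ0) (0, θ - θ0) + fderiv ℝ G (θ0, θ0) (θ - θ0, 0)) := by ring
    rw [this, hcanc, add_zero]
    calc |(G (θ0, θ) - G (θ0, θ0) - fderiv ℝ G (θ0, θ0) (0, θ - θ0)) +
        (G (θ, θ0) - G (θ0, θ0) - fderiv ℝ G (θ0, θ0) (θ - θ0, 0))|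
        ≤ |G (θ0, θ) - G (θ0, θ0) - fderiv ℝ G (θ0, θ0) (0, θ - θ0)| +
          |G (θ, θ0) - G (θ0, θ0) - fderiv ℝ G (θ0, θ0) (θ - θ0, 0)| := abs_add_le _ _
      _ ≤ C * ‖θ - θ0‖ ^ 2 + C * ‖θ - θ0‖ ^ 2 := add_le_add t1 t2
      _ = 2 * C * ‖θ - θ0‖ ^ 2 := by ring
  -- bound on each H difference
  have hHbd : ∀ i, |H i θ0 - H i θ| ≤ C * ‖θ - θ0‖ := by
    intro i
    rw [hHrep i θ0 hθ0, hHrep i θ hθ]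
    have heq : fderiv ℝ G (θ0, θ0) (0, Pi.single i 1) - fderiv ℝ G (θ, θ) (0, Pi.single i 1) =
        (fderiv ℝ G (θ0, θ0) - fderiv ℝ G (θ, θ)) (0, Pi.single i 1) := by simp
    rw [heq]
    have hLe := hLip (θ, θ) (hSmem hθ hθ) (θ0, θ0) ha
    have hna : ‖((θ0, θ0) : (Fin s → ℝ) × (Fin s → ℝ)) - (θ, θ)‖ = ‖θ - θ0‖ := by
      have : ((θ0, θ0) : (Fin s → ℝ) × (Fin s → ℝ)) - (θ, θ) = (θ0 - θ, θ0 - θ) := by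
        simp [Prod.ext_iff]
      rw [this, Prod.norm_def]
      simp [norm_sub_rev]
    have hsingle : ‖((0, Pi.single i 1) : (Fin s → ℝ) × (Fin s → ℝ))‖ ≤ 1 := by
      rw [hn0]
      refine (pi_norm_le_iff_of_nonneg zero_le_one).2 (fun j => ?_)
      rcases eq_or_ne j i with rfl | hji
      · simp
      · simp [Pi.single_eq_of_ne hji]
    calc |(fderiv ℝ G (θ0, θ0) - fderiv ℝ G (θ, θ)) (0, Pi.single i 1)|
        ≤ ‖fderiv ℝ G (θ0, θ0) - fderiv ℝ G (θ, θ)‖ * ‖((0, Pi.single i 1) :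
            (Fin s → ℝ) × (Fin s → ℝ))‖ :=
          (fderiv ℝ G (θ0, θ0) - fderiv ℝ G (θ, θ)).le_opNorm _
      _ ≤ (C * ‖θ - θ0‖) * 1 := by
          refine mul_le_mul ?_ hsingle (norm_nonneg _) (by positivity)
          rw [← hna]; exact hLe
      _ = C * ‖θ - θ0‖ := mul_one _
  have hsum : |∑ i, (H i θ0 - H i θ) * (θ i - θ0 i)| ≤ s * C * ‖θ - θ0‖ ^ 2 := by
    calc |∑ i, (H i θ0 - H i θ) * (θ i - θ0 i)| ≤ ∑ i, |(H i θ0 - H i θ) * (θ i - θ0 i)| :=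
          Finset.abs_sum_le_sum_abs _ _
      _ ≤ ∑ _i : Fin s, C * ‖θ - θ0‖ * ‖θ - θ0‖ := by
          refine Finset.sum_le_sum (fun i _ => ?_)
          rw [abs_mul]
          refine mul_le_mul (hHbd i) ?_ (abs_nonneg _) (by positivity)
          have : θ i - θ0 i = (θ - θ0) i := by simp
          rw [this]
          exact norm_le_pi_norm (θ - θ0) i
      _ = s * C * ‖θ - θ0‖ ^ 2 := by simp [Finset.sum_const]; ring
  constructor
  · calc |(G (θ0, θ) - G (θ0, θ0)) + (G (θ, θ0) - G (θ0, θ0))| ≤ 2 * C * ‖θ - θ0‖ ^ 2 := hsym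
      _ ≤ (2 * C + s * C) * ‖θ - θ0‖ ^ 2 := by nlinarith [mul_nonneg (mul_nonneg (Nat.cast_nonneg (α := ℝ) s) hC0) (sq_nonneg ‖θ - θ0‖)]
  · calc |((G (θ0, θ) - G (θ0, θ0)) + (G (θ, θ0) - G (θ0, θ0)))
          - ∑ i, (H i θ0 - H i θ) * (θ i - θ0 i)|
        ≤ |(G (θ0, θ) - G (θ0, θ0)) + (G (θ, θ0) - G (θ0, θ0))|
          + |∑ i, (H i θ0 - H i θ) * (θ i - θ0 i)| := abs_sub _ _
      _ ≤ 2 * C * ‖θ - θ0‖ ^ 2 + s * C * ‖θ - θ0‖ ^ 2 := add_le_add hsym hsum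
      _ = (2 * C + s * C) * ‖θ - θ0‖ ^ 2 := by ring

/-- Symmetric second-order cancellation (Lemma A.3): if `G(θ, θ)` is constant, `G` is twice
continuously differentiable with uniformly bounded second derivatives, and
`θ̂_n − θ₀ = O_p(1/√n)`, then
`[G(θ₀, θ̂_n) − G(θ₀, θ₀)] + [G(θ̂_n, θ₀) − G(θ₀, θ₀)]
  = Σ_i [H_i(θ₀) − H_i(θ̂_n)](θ̂_{n,i} − θ_{0,i}) + O_p(1/n)`,
and the whole expression is `O_p(1/n)`. -/
theorem symmetric_second_order_cancellation
    {Ω : Type*} [MeasurableSpace Ω] (μ : Measure Ω) [IsProbabilityMeasure μ]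
    {s : ℕ} (U : Set (Fin s → ℝ)) (hUopen : IsOpen U) (hUconv : Convex ℝ U)
    (G : (Fin s → ℝ) × (Fin s → ℝ) → ℝ) (hG : ContDiffOn ℝ 2 G (U ×ˢ U))
    (c : ℝ) (hGdiag : ∀ θ ∈ U, G (θ, θ) = c)
    (C : ℝ) (hC : ∀ x ∈ U ×ˢ U, ‖iteratedFDerivWithin ℝ 2 G (U ×ˢ U) x‖ ≤ C)
    (H : Fin s → (Fin s → ℝ) → ℝ)
    (hH : ∀ i, ∀ γ ∈ U, H i γ = fderiv ℝ (fun δ => G (γ, δ)) γ (Pi.single i 1))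
    (θ0 : Fin s → ℝ) (hθ0 : θ0 ∈ U)
    (θhat : ℕ → Ω → (Fin s → ℝ)) (hhatU : ∀ n ω, θhat n ω ∈ U)
    (hOp : IsBigOp μ (fun n ω => Real.sqrt n * ‖θhat n ω - θ0‖) (fun _ => 1)) :
    IsBigOp μ
      (fun n ω => n * (((G (θ0, θhat n ω) - G (θ0, θ0)) + (G (θhat n ω, θ0) - G (θ0, θ0)))
        - ∑ i, (H i θ0 - H i (θhat n ω)) * (θhat n ω i - θ0 i))) (fun _ => 1) ∧
    IsBigOp μ
      (fun n ω => n * ((G (θ0, θhat n ω) - G (θ0, θ0)) + (G (θhat n ω, θ0) - G (θ0, θ0))))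
      (fun _ => 1) := by
  obtain ⟨K, hK0, hKbd⟩ := aux_det U hUopen hUconv G hG c hGdiag C hC H hH θ0 hθ0
  -- a general principle: anything dominated by `K * (√n ‖θhat - θ0‖)²` is `O_p(1)`
  have main : ∀ X : ℕ → Ω → ℝ,
      (∀ n ω, |X n ω| ≤ K * (Real.sqrt n * ‖θhat n ω - θ0‖) ^ 2) →
      IsBigOp μ X (fun _ => 1) := by
    intro X hX ε hε
    obtain ⟨M, hM⟩ := hOp ε hε
    refine ⟨(K + 1) * (max M 0) ^ 2, fun n => ?_⟩
    refine lt_of_le_of_lt (measure_mono ?_) (hM n)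
    intro ω hω
    simp only [Set.mem_setOf_eq, mul_one] at hω ⊢
    set Y := Real.sqrt n * ‖θhat n ω - θ0‖ with hY
    have hY0 : 0 ≤ Y := mul_nonneg (Real.sqrt_nonneg _) (norm_nonneg _)
    have h2 : (K + 1) * (max M 0) ^ 2 < (K + 1) * Y ^ 2 := by
      refine lt_of_lt_of_le hω (le_trans (hX n ω) ?_)
      show K * Y ^ 2 ≤ (K + 1) * Y ^ 2
      nlinarith [sq_nonneg Y]
    have h3 : (max M 0) ^ 2 < Y ^ 2 := by nlinarith
    have h4 : max M 0 < Y := by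
      by_contra hcon
      push_neg at hcon
      exact absurd (pow_le_pow_left₀ hY0 hcon 2) (not_le.2 h3)
    rw [abs_of_nonneg hY0]
    exact lt_of_le_of_lt (le_max_left M 0) h4
  have hsq : ∀ n : ℕ, ∀ v : Fin s → ℝ, K * (Real.sqrt n * ‖v‖) ^ 2 = (n : ℝ) * (K * ‖v‖ ^ 2) := by
    intro n v
    rw [mul_pow, Real.sq_sqrt (Nat.cast_nonneg n)]
    ring
  constructor
  · refine main _ (fun n ω => ?_)
    rw [hsq n (θhat n ω - θ0), abs_mul, Nat.abs_cast]
    exact mul_le_mul_of_nonneg_left ((hKbd (θhat n ω) (hhatU n ω)).2) (Nat.cast_nonneg n)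
  · refine main _ (fun n ω => ?_)
    rw [hsq n (θhat n ω - θ0), abs_mul, Nat.abs_cast]
    exact mul_le_mul_of_nonneg_left ((hKbd (θhat n ω) (hhatU n ω)).1) (Nat.cast_nonneg n)
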